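/- (Bounds on the Winkler score for the Brier score.) Let S be the Brier score S(p,r) = −(p−r)², and let q₀ ∈ (0, 1/2]. Then for all p, r ∈ [0,1] and all q ∈ [q₀, 1−q₀], the Winkler score satisfies 1 − 2/q₀ ≤ w(p,q,r) ≤ 1. -/

import Mathlib

open Set

/-- The Brier (quadratic) score `S(p,r) = −(p−r)²`. -/
def brier (p r : ℝ) : ℝ := -(p - r) ^ 2

/-- The Winkler normalizer `T(p,q) := S(p, 1{p ≥ q}) − S(q, 1{p ≥ q})`. -/
noncomputable def winklerNormalizer (S : ℝ → ℝ → ℝ) (p q : ℝ) : ℝ :=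
  S p (if q ≤ p then 1 else 0) - S q (if q ≤ p then 1 else 0)

/-- The Winkler score `w(p,q,r) := (S(p,r) − S(q,r)) / T(p,q)`, with the convention
`0/0 := 0` (which is Lean's division-by-zero convention). -/
noncomputable def winklerScore (S : ℝ → ℝ → ℝ) (p q r : ℝ) : ℝ :=
  (S p r - S q r) / winklerNormalizer S p q

/-- **Bounds on the Winkler score for the Brier score.**
Let `S` be the Brier score `S(p,r) = −(p−r)²`, and let `q₀ ∈ (0, 1/2]`.  Then for all
`p, r ∈ [0,1]` and all `q ∈ [q₀, 1−q₀]`, the Winkler score satisfies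
`1 − 2/q₀ ≤ w(p,q,r) ≤ 1`. -/
theorem winkler_score_brier_bounds
    (q₀ : ℝ) (hq₀ : q₀ ∈ Ioc (0:ℝ) (1 / 2))
    (p r q : ℝ) (hp : p ∈ Icc (0:ℝ) 1) (hr : r ∈ Icc (0:ℝ) 1)
    (hq : q ∈ Icc q₀ (1 - q₀)) :
    1 - 2 / q₀ ≤ winklerScore brier p q r ∧ winklerScore brier p q r ≤ 1 := by
  obtain ⟨hq0, hq0half⟩ := hq₀
  obtain ⟨hp0, hp1⟩ := hp
  obtain ⟨hr0, hr1⟩ := hr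
  obtain ⟨hqlo, hqhi⟩ := hq
  have hq0ne : q₀ ≠ 0 := ne_of_gt hq0
  have h2 : q₀ * (1 - 2 / q₀) = q₀ - 2 := by field_simp
  unfold winklerScore winklerNormalizer brier
  rcases le_or_gt q p with h | h
  · rw [if_pos h]
    rcases eq_or_lt_of_le h with heq | hlt
    · subst heq
      simp only [sub_self, zero_div]
      constructor
      · rw [sub_nonpos, le_div_iff₀ hq0]; linarith
      · norm_num
    · have hD : (0:ℝ) < -(p - 1) ^ 2 - -(q - 1) ^ 2 := by nlinarith
      constructor
      · rw [le_div_iff₀ hD, ← mul_le_mul_iff_right₀ hq0, ← mul_assoc, h2]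
        nlinarith [mul_nonneg (sub_nonneg.2 hr1) (sub_nonneg.2 hlt.le),
          mul_nonneg hr0 (sub_nonneg.2 hlt.le)]
      · rw [div_le_one hD]
        nlinarith [mul_nonneg (sub_nonneg.2 hr1) (sub_nonneg.2 hlt.le)]
  · rw [if_neg (not_le.2 h)]
    have hD : (0:ℝ) < -(p - 0) ^ 2 - -(q - 0) ^ 2 := by nlinarith
    constructor
    · rw [le_div_iff₀ hD, ← mul_le_mul_iff_right₀ hq0, ← mul_assoc, h2]
      nlinarith [mul_nonneg (sub_nonneg.2 hr1) (sub_nonneg.2 h.le),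
        mul_nonneg hr0 (sub_nonneg.2 h.le)]
    · rw [div_le_one hD]
      nlinarith [mul_nonneg hr0 (sub_nonneg.2 h.le)]
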